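/- Define s₁ : (ℕ → ℕ) → Opens(ℕ → ℕ) by s₁(f) = ⋃ {n : f n ≠ 0} {g : g 0 = n and g (f n) = n}. For n, k ∈ ℕ let cₙ be the constant function with value n, and let cₙₖ be the function with cₙₖ(i) = n for i ≠ k and cₙₖ(k) = n + 1. Define r₁ : Opens(ℕ → ℕ) → (ℕ → ℕ) by: r₁(U)(n) = 0 if cₙ ∉ U, and otherwise r₁(U)(n) = sup {k ≥ 1 : cₙₖ ∉ U} (this set is finite since U is open and cₙₖ converges to cₙ as k → ∞; the supremum of the empty set is 0). Then r₁ ∘ s₁ is the identity on ℕ → ℕ. -/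
import Mathlib


open Topology TopologicalSpace

/-- The open subset `s₁ f = ⋃_{n : f n ≠ 0} {g | g 0 = n ∧ g (f n) = n}` of the Baire
space, associated to `f : ℕ → ℕ`. -/
def s₁ (f : ℕ → ℕ) : Opens (ℕ → ℕ) :=
  ⟨⋃ n ∈ {n : ℕ | f n ≠ 0}, {g : ℕ → ℕ | g 0 = n ∧ g (f n) = n}, by
    refine isOpen_biUnion fun n _ => ?_
    have : {g : ℕ → ℕ | g 0 = n ∧ g (f n) = n}
        = (fun g : ℕ → ℕ => g 0) ⁻¹' {n} ∩ (fun g : ℕ → ℕ => g (f n)) ⁻¹' {n} := by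
      ext g; simp [Set.mem_setOf_eq]
    rw [this]
    exact ((isOpen_discrete ({n} : Set ℕ)).preimage (continuous_apply 0)).inter
      ((isOpen_discrete ({n} : Set ℕ)).preimage (continuous_apply (f n)))⟩

/-- The constant function `cₙ` with value `n`. -/
def c (n : ℕ) : ℕ → ℕ := fun _ => n

/-- The function `cₙₖ` with `cₙₖ i = n` for `i ≠ k` and `cₙₖ k = n + 1`. -/
def c' (n k : ℕ) : ℕ → ℕ := Function.update (fun _ => n) k (n + 1)

/-- The map `r₁ : Opens(ℕ → ℕ) → (ℕ → ℕ)`: `r₁ U n = 0` if `cₙ ∉ U`, and otherwise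
`r₁ U n = sup {k ≥ 1 : cₙₖ ∉ U}` (the supremum of the empty set being `0`). -/
noncomputable def r₁ (U : Opens (ℕ → ℕ)) : ℕ → ℕ := fun n =>
  open scoped Classical in
  if c n ∈ U then sSup {k : ℕ | 1 ≤ k ∧ c' n k ∉ U} else 0

lemma mem_s₁ {f g : ℕ → ℕ} : g ∈ s₁ f ↔ ∃ n, f n ≠ 0 ∧ g 0 = n ∧ g (f n) = n := by
  change g ∈ ⋃ n ∈ {n : ℕ | f n ≠ 0}, {g : ℕ → ℕ | g 0 = n ∧ g (f n) = n} ↔ _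
  simp only [Set.mem_setOf_eq, Set.mem_iUnion, exists_prop]

lemma c'_apply (n k i : ℕ) : c' n k i = if i = k then n + 1 else n := by
  simp [c', Function.update]

/-- `r₁ ∘ s₁` is the identity on the Baire space. -/
theorem stmt8 : r₁ ∘ s₁ = id := by
  funext f n
  simp only [Function.comp_apply, id_eq, r₁]
  by_cases h : f n = 0
  · rw [if_neg]
    · exact h.symm
    · rw [mem_s₁]
      rintro ⟨m, hm, h0, _⟩
      simp only [c] at h0
      subst h0
      exact hm h
  · rw [if_pos]
    · have hset : {k : ℕ | 1 ≤ k ∧ c' n k ∉ s₁ f} = {f n} := by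
        ext k
        simp only [Set.mem_setOf_eq, Set.mem_singleton_iff]
        constructor
        · rintro ⟨hk, hns⟩
          by_contra hne
          apply hns
          rw [mem_s₁]
          refine ⟨n, h, ?_, ?_⟩
          · rw [c'_apply, if_neg]; omega
          · rw [c'_apply, if_neg]; exact fun e => hne e.symm
        · rintro rfl
          refine ⟨Nat.one_le_iff_ne_zero.mpr h, ?_⟩
          rw [mem_s₁]
          rintro ⟨m, hm, h0, hfm⟩
          rw [c'_apply] at h0 hfm
          rcases eq_or_ne 0 (f n) with e | e
          · exact h e.symm
          · rw [if_neg e] at h0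
            subst h0
            rw [if_pos rfl] at hfm
            omega
      rw [hset, csSup_singleton]
    · rw [mem_s₁]
      exact ⟨n, h, rfl, rfl⟩
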